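/- In a systematic q-ary Hamming code Ham(r,q), every minimum (inclusion-minimal) recovery set for a data symbol has cardinality either 1 or q^{r−1} − 1. -/

import Mathlib

/-- `R` is a recovery set for data symbol `i` with respect to the generator matrix `G`:
the standard basis vector `e_i` lies in the span of the columns of `G` indexed by `R`. -/
def IsRecoverySet {k n : ℕ} {F : Type*} [Field F] (G : Matrix (Fin k) (Fin n) F)
    (i : Fin k) (R : Finset (Fin n)) : Prop :=
  (Pi.single i 1 : Fin k → F) ∈ Submodule.span F ((fun j => fun a => G a j) '' (R : Set (Fin n)))

/-- `R` is a minimum (inclusion-minimal) recovery set for data symbol `i`. -/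
def IsMinRecoverySet {k n : ℕ} {F : Type*} [Field F] (G : Matrix (Fin k) (Fin n) F)
    (i : Fin k) (R : Finset (Fin n)) : Prop :=
  IsRecoverySet G i R ∧ ∀ R' : Finset (Fin n), R' ⊂ R → ¬ IsRecoverySet G i R'

/-- In a systematic `q`-ary Hamming code `Ham(r,q)` (parity-check matrix `H`
with one nonzero column from each one-dimensional subspace of `F_q^r`, systematic generator
matrix `G` whose rows span the kernel of `H`), every minimum recovery set for a data symbol
has cardinality either `1` or `q^(r-1) - 1`. -/
theorem stmt3 {r n k : ℕ} {F : Type*} [Field F] [Fintype F] [DecidableEq F]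
    (hr : 2 ≤ r)
    (hn : n = (Fintype.card F ^ r - 1) / (Fintype.card F - 1))
    (hk : k = (Fintype.card F ^ r - 1) / (Fintype.card F - 1) - r)
    (H : Matrix (Fin r) (Fin n) F)
    (hnz : ∀ j : Fin n, (fun a => H a j) ≠ (0 : Fin r → F))
    (hrep : ∀ v : Fin r → F, v ≠ 0 → ∃ (j : Fin n) (a : F), v = a • fun b => H b j)
    (hinj : ∀ (j j' : Fin n) (a : F), (fun b => H b j) = a • (fun b => H b j') → j = j')
    (G : Matrix (Fin k) (Fin n) F)
    (hspan : Submodule.span F (Set.range G) = LinearMap.ker H.mulVecLin)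
    (hsys : ∀ a : Fin k, ∃ j : Fin n, (fun b => G b j) = Pi.single a 1)
    (i : Fin k) (R : Finset (Fin n)) (hR : IsMinRecoverySet G i R) :
    R.card = 1 ∨ R.card = Fintype.card F ^ (r - 1) - 1 := by
  classical
  obtain ⟨hrec, hmin⟩ := hR
  obtain ⟨ji, hji⟩ := hsys i
  by_cases hmem : ji ∈ R
  · -- the systematic column is in `R`, so `R = {ji}` by minimality.
    left
    have h1 : IsRecoverySet G i {ji} := by
      apply Submodule.subset_span
      exact ⟨ji, by simp, hji⟩
    have hReq : R = {ji} := by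
      by_contra hne
      exact hmin {ji} (Finset.ssubset_iff_subset_ne.mpr
        ⟨Finset.singleton_subset_iff.mpr hmem, fun h => hne h.symm⟩) h1
    simp [hReq]
  · right
    -- extract coefficients
    obtain ⟨l, hlsupp, hl⟩ := (Finsupp.mem_span_image_iff_linearCombination F).mp hrec
    rw [Finsupp.mem_supported] at hlsupp
    -- all coefficients on R are nonzero, by minimality
    have hlne : ∀ j ∈ R, l j ≠ 0 := by
      intro j hj hl0
      refine hmin (R.erase j) (Finset.erase_ssubset hj) ?_
      refine (Finsupp.mem_span_image_iff_linearCombination F).mpr ⟨l, ?_, hl⟩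
      rw [Finsupp.mem_supported]
      intro v hv
      have hvR : v ∈ R := hlsupp hv
      have hvne : v ≠ j := by
        rintro rfl
        exact (Finsupp.mem_support_iff.mp hv) hl0
      simp [Finset.mem_erase, hvne, hvR]
    have hlji : l ji = 0 := by
      by_contra h
      exact hmem (hlsupp (Finsupp.mem_support_iff.mpr h))
    -- the "dual codeword" vector
    set x : Fin n → F := fun j => l j - (if j = ji then 1 else 0) with hx
    have hl' : ∀ a, (∑ j, l j * G a j) = (Pi.single i 1 : Fin k → F) a := by
      intro a
      have h1 := congrFun hl a
      rw [Finsupp.linearCombination_apply, Finsupp.sum, Finset.sum_apply] at h1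
      simp only [Pi.smul_apply, smul_eq_mul] at h1
      rw [← h1]
      exact (Finset.sum_subset (Finset.subset_univ _) (fun j _ hj => by
        simp [Finsupp.notMem_support_iff.mp hj])).symm
    -- the dot-product-with-x functional
    set φ : (Fin n → F) →ₗ[F] F :=
      { toFun := fun v => ∑ j, x j * v j
        map_add' := by intro a b; simp [mul_add, Finset.sum_add_distrib]
        map_smul' := by
          intro c a
          simp only [Pi.smul_apply, smul_eq_mul, RingHom.id_apply, Finset.mul_sum]
          exact Finset.sum_congr rfl fun j _ => by ring } with hφ
    have hφapp : ∀ v, φ v = ∑ j, x j * v j := fun v => rfl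
    -- φ vanishes on the row space of G, i.e. on ker H
    have hrow : ∀ a : Fin k, φ (G a) = 0 := by
      intro a
      rw [hφapp]
      have : ∀ j, x j * G a j = l j * G a j - (if j = ji then 1 else 0) * G a j := by
        intro j; rw [hx]; ring
      rw [Finset.sum_congr rfl fun j _ => this j, Finset.sum_sub_distrib, hl']
      have h2 : (∑ j, (if j = ji then (1:F) else 0) * G a j) = G a ji := by
        simp [ite_mul]
      rw [h2]
      have h3 : G a ji = (Pi.single i 1 : Fin k → F) a := congrFun hji a
      rw [h3, sub_self]
    have hle : LinearMap.ker H.mulVecLin ≤ LinearMap.ker φ := by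
      rw [← hspan, Submodule.span_le]
      rintro _ ⟨a, rfl⟩
      exact hrow a
    -- factor φ through H
    obtain ⟨ψ, hψ⟩ := LinearMap.exists_extend
      ((Submodule.liftQ _ φ hle).comp (H.mulVecLin.quotKerEquivRange).symm.toLinearMap)
    have hfact : ∀ u, ψ (H.mulVecLin u) = φ u := by
      intro u
      have h1 : H.mulVecLin u ∈ LinearMap.range H.mulVecLin := LinearMap.mem_range_self _ u
      have h2 := LinearMap.congr_fun hψ ⟨H.mulVecLin u, h1⟩
      simp only [LinearMap.coe_comp, Function.comp_apply, Submodule.coe_subtype,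
        LinearEquiv.coe_coe] at h2
      rw [LinearMap.quotKerEquivRange_symm_apply_image, Submodule.mkQ_apply,
        Submodule.liftQ_apply] at h2
      exact h2
    -- ψ on columns of H computes x
    have hxcol : ∀ j, ψ (fun b => H b j) = x j := by
      intro j
      have h1 : (fun b => H b j) = H.mulVecLin (Pi.single j 1) := by
        rw [Matrix.mulVecLin_apply, Matrix.mulVec_single]
        simp
        rfl
      rw [h1, hfact, hφapp]
      simp [Pi.single_apply, mul_ite]
    have hxji : x ji = -1 := by simp [hx, hlji]
    -- ψ is surjective
    have hsurj : Function.Surjective ψ := by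
      intro c
      refine ⟨(-c) • fun b => H b ji, ?_⟩
      rw [map_smul, hxcol, hxji]
      simp
    have hfr : Module.finrank F (LinearMap.ker ψ) = r - 1 := by
      have h1 := LinearMap.finrank_range_add_finrank_ker ψ
      rw [LinearMap.range_eq_top.mpr hsurj, finrank_top, Module.finrank_self,
        Module.finrank_pi, Fintype.card_fin] at h1
      omega
    have hcardker : Fintype.card (LinearMap.ker ψ) = Fintype.card F ^ (r-1) := by
      rw [Module.card_eq_pow_finrank (K := F), hfr]
    have hZ : (Finset.univ.filter (fun v : Fin r → F => ψ v = 0)).card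
        = Fintype.card F ^ (r-1) := by
      rw [← hcardker, ← Fintype.card_subtype]
      exact Fintype.card_congr (Equiv.subtypeEquivRight (fun v => (LinearMap.mem_ker).symm)).symm
    have hN : (Finset.univ.filter (fun v : Fin r → F => ψ v ≠ 0)).card
        = Fintype.card F ^ r - Fintype.card F ^ (r-1) := by
      have h1 := Finset.card_filter_add_card_filter_not
        (s := (Finset.univ : Finset (Fin r → F))) (p := fun v => ψ v = 0)
      have h2 : Fintype.card (Fin r → F) = Fintype.card F ^ r := by simp
      rw [Finset.card_univ, h2, hZ] at h1
      simp only [ne_eq]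
      omega
    -- membership in the support of x
    have hxS : ∀ j, x j ≠ 0 ↔ j ∈ insert ji R := by
      intro j
      rcases eq_or_ne j ji with rfl | hne
      · simp [hxji]
      · have hxj : x j = l j := by simp [hx, hne]
        rw [hxj, Finset.mem_insert]
        constructor
        · intro h
          exact Or.inr (hlsupp (Finsupp.mem_support_iff.mpr h))
        · rintro (h | h)
          · exact absurd h hne
          · exact hlne j h
    -- the bijection (j, a) ↦ a • (column j of H)
    have hbij : ((insert ji R) ×ˢ (Finset.univ.erase (0:F))).card
        = (Finset.univ.filter (fun v : Fin r → F => ψ v ≠ 0)).card := by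
      refine Finset.card_bij (fun p _ => p.2 • fun b => H b p.1) ?_ ?_ ?_
      · rintro ⟨j, a⟩ hp
        rw [Finset.mem_product] at hp
        obtain ⟨hj, ha⟩ := hp
        have ha0 : a ≠ 0 := (Finset.mem_erase.mp ha).1
        rw [Finset.mem_filter]
        refine ⟨Finset.mem_univ _, ?_⟩
        rw [map_smul, hxcol]
        simp only [smul_eq_mul]
        exact mul_ne_zero ha0 ((hxS j).mpr hj)
      · rintro ⟨j, a⟩ hp ⟨j', a'⟩ hp' heq
        rw [Finset.mem_product] at hp hp'
        have ha0 : a ≠ 0 := (Finset.mem_erase.mp hp.2).1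
        have ha0' : a' ≠ 0 := (Finset.mem_erase.mp hp'.2).1
        have hjj : j = j' := by
          refine hinj j j' (a⁻¹ * a') ?_
          funext b
          have h := congrFun heq b
          simp only [Pi.smul_apply, smul_eq_mul] at h ⊢
          rw [mul_assoc, ← h, inv_mul_cancel_left₀ ha0]
        subst hjj
        obtain ⟨b, hb⟩ := Function.ne_iff.mp (hnz j)
        have := congrFun heq b
        simp only [Pi.smul_apply, smul_eq_mul] at this
        have haa : a = a' := by
          have := mul_right_cancel₀ (by simpa using hb) this
          exact this
        simp [haa]
      · intro v hv
        rw [Finset.mem_filter] at hv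
        have hvne : v ≠ 0 := by
          intro h0
          exact hv.2 (by rw [h0, map_zero])
        obtain ⟨j, a, hva⟩ := hrep v hvne
        have ha0 : a ≠ 0 := by
          rintro rfl
          exact hvne (by simp [hva])
        have hxj : x j ≠ 0 := by
          intro h0
          apply hv.2
          rw [hva, map_smul, hxcol, h0]
          simp
        refine ⟨(j, a), ?_, hva.symm⟩
        rw [Finset.mem_product]
        exact ⟨(hxS j).mp hxj, Finset.mem_erase.mpr ⟨ha0, Finset.mem_univ _⟩⟩
    -- now count
    have hq : 2 ≤ Fintype.card F := Fintype.one_lt_card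
    have hcardprod : ((insert ji R) ×ˢ (Finset.univ.erase (0:F))).card
        = (R.card + 1) * (Fintype.card F - 1) := by
      rw [Finset.card_product, Finset.card_insert_of_notMem hmem,
        Finset.card_erase_of_mem (Finset.mem_univ _), Finset.card_univ]
    have hpow : Fintype.card F ^ r - Fintype.card F ^ (r-1)
        = Fintype.card F ^ (r-1) * (Fintype.card F - 1) := by
      have h1 : Fintype.card F ^ r = Fintype.card F ^ (r-1) * Fintype.card F := by
        rw [← pow_succ]
        congr 1
        omega
      rw [h1, Nat.mul_sub, Nat.mul_one]
    have hkey : (R.card + 1) * (Fintype.card F - 1)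
        = Fintype.card F ^ (r-1) * (Fintype.card F - 1) := by
      rw [← hcardprod, hbij, hN, hpow]
    have hfin : R.card + 1 = Fintype.card F ^ (r-1) :=
      Nat.eq_of_mul_eq_mul_right (by omega) hkey
    omega
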